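/- For every β > 0 and all points x₁, x₂, x₃ ∈ [0,1], I₃(x₁,x₂,x₃,β) = H(x₁,x₂,x₃,β)² ≤ Σ_{k=1}^{3} H(0,x_k,1,β)² = Σ_{k=1}^{3} I₃(0,x_k,1,β). -/

import Mathlib

/-- The function
`H(x₁,x₂,x₃,β) = x₁e^{−βx₁}(e^{−βx₃} − e^{−βx₂}) + x₂e^{−βx₂}(e^{−βx₁} − e^{−βx₃})
  + x₃e^{−βx₃}(e^{−βx₂} − e^{−βx₁})`
whose square `I₃ = H²` is the determinant factor of three support points in the
three-parameter exponential regression model `η(x,α₁,α₂,β) = α₁ + α₂e^{−βx}` on `[0,1]`. -/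
noncomputable def H (x₁ x₂ x₃ β : ℝ) : ℝ :=
  x₁ * Real.exp (-β * x₁) * (Real.exp (-β * x₃) - Real.exp (-β * x₂)) +
    x₂ * Real.exp (-β * x₂) * (Real.exp (-β * x₁) - Real.exp (-β * x₃)) +
    x₃ * Real.exp (-β * x₃) * (Real.exp (-β * x₂) - Real.exp (-β * x₁))


lemma H_deriv1 (β x₂ x₃ : ℝ) (s : ℝ) :
    HasDerivAt (fun s => H s x₂ x₃ β)
      ((Real.exp (-β*s) + s * (Real.exp (-β*s) * -β)) * (Real.exp (-β*x₃) - Real.exp (-β*x₂))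
        + x₂ * Real.exp (-β*x₂) * (Real.exp (-β*s) * -β)
        - x₃ * Real.exp (-β*x₃) * (Real.exp (-β*s) * -β)) s := by
  have h1 : HasDerivAt (fun s : ℝ => -β * s) (-β) s := by
    simpa using (hasDerivAt_id s).const_mul (-β)
  have h2 : HasDerivAt (fun s => Real.exp (-β*s)) (Real.exp (-β*s) * -β) s := h1.exp
  have h3 : HasDerivAt (fun s : ℝ => s * Real.exp (-β*s))
      (1 * Real.exp (-β*s) + s * (Real.exp (-β*s) * -β)) s := (hasDerivAt_id s).mul h2
  have h4 := ((h3.mul_const (Real.exp (-β*x₃) - Real.exp (-β*x₂))).add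
      (h2.const_mul (x₂ * Real.exp (-β*x₂)))).sub (h2.const_mul (x₃ * Real.exp (-β*x₃)))
  have h5 := h4.add_const (x₂ * Real.exp (-β*x₂) * (-Real.exp (-β*x₃))
      + x₃ * Real.exp (-β*x₃) * Real.exp (-β*x₂))
  exact (h5.congr_deriv (by ring)).congr_of_eventuallyEq
    (Filter.Eventually.of_forall fun y => by simp only [H, Pi.add_apply, Pi.sub_apply]; ring)

lemma H_deriv3 (β x₁ x₂ : ℝ) (s : ℝ) :
    HasDerivAt (fun s => H x₁ x₂ s β)
      ((Real.exp (-β*s) + s * (Real.exp (-β*s) * -β)) * (Real.exp (-β*x₂) - Real.exp (-β*x₁))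
        + x₁ * Real.exp (-β*x₁) * (Real.exp (-β*s) * -β)
        - x₂ * Real.exp (-β*x₂) * (Real.exp (-β*s) * -β)) s := by
  have h1 : HasDerivAt (fun s : ℝ => -β * s) (-β) s := by
    simpa using (hasDerivAt_id s).const_mul (-β)
  have h2 : HasDerivAt (fun s => Real.exp (-β*s)) (Real.exp (-β*s) * -β) s := h1.exp
  have h3 : HasDerivAt (fun s : ℝ => s * Real.exp (-β*s))
      (1 * Real.exp (-β*s) + s * (Real.exp (-β*s) * -β)) s := (hasDerivAt_id s).mul h2
  have h4 := ((h3.mul_const (Real.exp (-β*x₂) - Real.exp (-β*x₁))).add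
      (h2.const_mul (x₁ * Real.exp (-β*x₁)))).sub (h2.const_mul (x₂ * Real.exp (-β*x₂)))
  have h5 := h4.add_const (x₂ * Real.exp (-β*x₂) * Real.exp (-β*x₁)
      - x₁ * Real.exp (-β*x₁) * Real.exp (-β*x₂))
  exact (h5.congr_deriv (by ring)).congr_of_eventuallyEq
    (Filter.Eventually.of_forall fun y => by simp only [H, Pi.add_apply, Pi.sub_apply]; ring)

/-- `H` is antitone in its first argument on `Iic x₂`, provided `x₂ ≤ x₃`. -/
lemma H_anti1 (β x₂ x₃ : ℝ) (hβ : 0 < β) (h23 : x₂ ≤ x₃) :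
    AntitoneOn (fun s => H s x₂ x₃ β) (Set.Iic x₂) := by
  apply antitoneOn_of_deriv_nonpos (convex_Iic x₂)
  · exact fun s _ => (H_deriv1 β x₂ x₃ s).differentiableAt.continuousAt.continuousWithinAt
  · exact fun s _ => (H_deriv1 β x₂ x₃ s).differentiableAt.differentiableWithinAt
  · intro s hs
    rw [interior_Iic] at hs
    rw [(H_deriv1 β x₂ x₃ s).deriv]
    have hs2 : s ≤ x₂ := le_of_lt hs
    have hE : (0:ℝ) < Real.exp (-β*s) := Real.exp_pos _
    have hwv : Real.exp (-β*x₃) ≤ Real.exp (-β*x₂) :=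
      Real.exp_le_exp.2 (by nlinarith)
    have key : Real.exp (-β*x₃) * (1 + β*(x₃-x₂)) ≤ Real.exp (-β*x₂) := by
      have h1 : 1 + β*(x₃-x₂) ≤ Real.exp (β*(x₃-x₂)) := by
        have := Real.add_one_le_exp (β*(x₃-x₂)); linarith
      have h2 : Real.exp (-β*x₃) * Real.exp (β*(x₃-x₂)) = Real.exp (-β*x₂) := by
        rw [← Real.exp_add]; ring_nf
      nlinarith [Real.exp_pos (-β*x₃)]
    nlinarith [mul_nonneg (mul_nonneg hβ.le (sub_nonneg.2 hs2))
        (sub_nonneg.2 hwv), Real.exp_pos (-β*x₃)]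

/-- `H` is monotone in its third argument on `Ici x₂`, provided `x₁ ≤ x₂`. -/
lemma H_mono3 (β x₁ x₂ : ℝ) (hβ : 0 < β) (h12 : x₁ ≤ x₂) :
    MonotoneOn (fun s => H x₁ x₂ s β) (Set.Ici x₂) := by
  apply monotoneOn_of_deriv_nonneg (convex_Ici x₂)
  · exact fun s _ => (H_deriv3 β x₁ x₂ s).differentiableAt.continuousAt.continuousWithinAt
  · exact fun s _ => (H_deriv3 β x₁ x₂ s).differentiableAt.differentiableWithinAt
  · intro s hs
    rw [interior_Ici] at hs
    rw [(H_deriv3 β x₁ x₂ s).deriv]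
    have hs2 : x₂ ≤ s := le_of_lt hs
    have hvu : Real.exp (-β*x₂) ≤ Real.exp (-β*x₁) :=
      Real.exp_le_exp.2 (by nlinarith)
    have key : Real.exp (-β*x₁) * (1 - β*(x₂-x₁)) ≤ Real.exp (-β*x₂) := by
      have h1 : 1 - β*(x₂-x₁) ≤ Real.exp (-(β*(x₂-x₁))) := by
        have := Real.add_one_le_exp (-(β*(x₂-x₁))); linarith
      have h2 : Real.exp (-β*x₁) * Real.exp (-(β*(x₂-x₁))) = Real.exp (-β*x₂) := by
        rw [← Real.exp_add]; ring_nf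
      nlinarith [Real.exp_pos (-β*x₁)]
    nlinarith [mul_nonneg (mul_nonneg hβ.le (sub_nonneg.2 hs2))
        (sub_nonneg.2 hvu), Real.exp_pos (-β*s)]

lemma H_key (β : ℝ) (hβ : 0 < β) (x₁ x₂ x₃ : ℝ) (h0 : 0 ≤ x₁) (h12 : x₁ ≤ x₂)
    (h23 : x₂ ≤ x₃) (h1 : x₃ ≤ 1) : (H x₁ x₂ x₃ β)^2 ≤ (H 0 x₂ 1 β)^2 := by
  have hzero : H x₂ x₂ x₃ β = 0 := by simp only [H]; ring
  have hge : 0 ≤ H x₁ x₂ x₃ β := by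
    have := H_anti1 β x₂ x₃ hβ h23 (Set.mem_Iic.2 h12) (Set.mem_Iic.2 le_rfl) h12
    simpa [hzero] using this
  have hle1 : H x₁ x₂ x₃ β ≤ H x₁ x₂ 1 β :=
    H_mono3 β x₁ x₂ hβ h12 (Set.mem_Ici.2 h23) (Set.mem_Ici.2 (h23.trans h1)) h1
  have hle2 : H x₁ x₂ 1 β ≤ H 0 x₂ 1 β :=
    H_anti1 β x₂ 1 hβ (h23.trans h1) (Set.mem_Iic.2 (h0.trans h12)) (Set.mem_Iic.2 h12) h0
  nlinarith

/-- For `β > 0` and arbitrary points `x₁, x₂, x₃ ∈ [0,1]`,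
`I₃(x₁,x₂,x₃,β) = H(x₁,x₂,x₃,β)² ≤ ∑ₖ H(0,x_k,1,β)² = ∑ₖ I₃(0,x_k,1,β)`. -/
theorem H_sq_le_sum (β : ℝ) (hβ : 0 < β) (x₁ x₂ x₃ : ℝ)
    (h₁ : x₁ ∈ Set.Icc (0 : ℝ) 1) (h₂ : x₂ ∈ Set.Icc (0 : ℝ) 1)
    (h₃ : x₃ ∈ Set.Icc (0 : ℝ) 1) :
    (H x₁ x₂ x₃ β) ^ 2 ≤ (H 0 x₁ 1 β) ^ 2 + (H 0 x₂ 1 β) ^ 2 + (H 0 x₃ 1 β) ^ 2 := by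
  obtain ⟨ha1, hb1⟩ := h₁
  obtain ⟨ha2, hb2⟩ := h₂
  obtain ⟨ha3, hb3⟩ := h₃
  rcases le_total x₁ x₂ with h12 | h21 <;> rcases le_total x₂ x₃ with h23 | h32 <;>
    rcases le_total x₁ x₃ with h13 | h31
  · have := H_key β hβ x₁ x₂ x₃ ha1 h12 h23 hb3
    nlinarith [sq_nonneg (H 0 x₁ 1 β), sq_nonneg (H 0 x₃ 1 β)]
  · have := H_key β hβ x₁ x₂ x₃ ha1 h12 h23 hb3
    nlinarith [sq_nonneg (H 0 x₁ 1 β), sq_nonneg (H 0 x₃ 1 β)]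
  · have := H_key β hβ x₁ x₃ x₂ ha1 h13 h32 hb2
    have heq : (H x₁ x₂ x₃ β)^2 = (H x₁ x₃ x₂ β)^2 := by simp only [H]; ring
    nlinarith [sq_nonneg (H 0 x₁ 1 β), sq_nonneg (H 0 x₂ 1 β)]
  · have := H_key β hβ x₃ x₁ x₂ ha3 h31 h12 hb2
    have heq : (H x₁ x₂ x₃ β)^2 = (H x₃ x₁ x₂ β)^2 := by simp only [H]; ring
    nlinarith [sq_nonneg (H 0 x₂ 1 β), sq_nonneg (H 0 x₃ 1 β)]
  · have := H_key β hβ x₂ x₁ x₃ ha2 h21 h13 hb3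
    have heq : (H x₁ x₂ x₃ β)^2 = (H x₂ x₁ x₃ β)^2 := by simp only [H]; ring
    nlinarith [sq_nonneg (H 0 x₂ 1 β), sq_nonneg (H 0 x₃ 1 β)]
  · have := H_key β hβ x₂ x₃ x₁ ha2 h23 h31 hb1
    have heq : (H x₁ x₂ x₃ β)^2 = (H x₂ x₃ x₁ β)^2 := by simp only [H]; ring
    nlinarith [sq_nonneg (H 0 x₁ 1 β), sq_nonneg (H 0 x₂ 1 β)]
  · have := H_key β hβ x₃ x₂ x₁ ha3 h32 h21 hb1
    have heq : (H x₁ x₂ x₃ β)^2 = (H x₃ x₂ x₁ β)^2 := by simp only [H]; ring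
    nlinarith [sq_nonneg (H 0 x₁ 1 β), sq_nonneg (H 0 x₃ 1 β)]
  · have := H_key β hβ x₃ x₂ x₁ ha3 h32 h21 hb1
    have heq : (H x₁ x₂ x₃ β)^2 = (H x₃ x₂ x₁ β)^2 := by simp only [H]; ring
    nlinarith [sq_nonneg (H 0 x₁ 1 β), sq_nonneg (H 0 x₃ 1 β)]
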